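/- Fix a partition of {1,...,n} into two disjoint subsets N₁ and N₂, and declare a classical crossing of a braid word even if its two strands belong to the same subset and odd otherwise. Then this component-wise parity satisfies the parity axioms: under each defining relation of FB_n, parities of crossings not involved in the relation are unchanged, corresponding crossings on the two sides have equal parities as specified, in a classical second Reidemeister move both crossings have the same parity, and in a classical third Reidemeister move the number of odd crossings among the three is even. -/

import Mathlib

set_option maxHeartbeats 1000000

namespace OneTermBracket

/-- Letters (generators) of free braid words on `n` strands:
`zeta i` is a classical crossing, `tau i` a virtual crossing, `1 ≤ i+1 ≤ n-1`. -/
inductive Letter (n : ℕ) where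
  | zeta (i : Fin (n-1))
  | tau  (i : Fin (n-1))
deriving DecidableEq

namespace Letter

def idx {n : ℕ} : Letter n → Fin (n-1)
  | zeta i => i
  | tau i => i

def isZeta {n : ℕ} : Letter n → Bool
  | zeta _ => true
  | tau _ => false

end Letter

def lo {n : ℕ} (i : Fin (n-1)) : Fin n := ⟨i.1, by have := i.2; omega⟩
def hi {n : ℕ} (i : Fin (n-1)) : Fin n := ⟨i.1 + 1, by have := i.2; omega⟩

/-- The transposition `(i, i+1)` of `{1, …, n}`. -/
def sPerm {n : ℕ} (i : Fin (n-1)) : Equiv.Perm (Fin n) := Equiv.swap (lo i) (hi i)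

/-- Each letter acts on positions as the transposition `(i, i+1)`. -/
def transOf {n : ℕ} (g : Letter n) : Equiv.Perm (Fin n) := sPerm g.idx

/-- The permutation realized by the prefix of length `j` of a braid word,
mapping the top label of a strand to its position at level `j`. -/
def prefPerm {n : ℕ} (w : List (Letter n)) (j : ℕ) : Equiv.Perm (Fin n) :=
  (((w.take j).map transOf).reverse).prod

/-- The permutation `P(β)` of a braid word (top endpoint `k` goes to bottom endpoint `P k`). -/
def permOf {n : ℕ} (w : List (Letter n)) : Equiv.Perm (Fin n) :=
  ((w.map transOf).reverse).prod

/-- The unordered pair of (top labels of the) strands crossing at position `j` of `w`. -/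
def strandsAt {n : ℕ} (w : List (Letter n)) (j : ℕ) : Option (Sym2 (Fin n)) :=
  (w[j]?).map fun g => s((prefPerm w j)⁻¹ (lo g.idx), (prefPerm w j)⁻¹ (hi g.idx))

/-- Component-wise parity determined by a partition `{1,…,n} = N₁ ⊔ N₂` (encoded by
`c : Fin n → Bool`): a classical crossing is odd (`1`) iff its two strands lie in
different parts. Non-classical positions get `0`. -/
def cwParity {n : ℕ} (c : Fin n → Bool) (w : List (Letter n)) (j : ℕ) : ZMod 2 :=
  match w[j]? with
  | some (.zeta i) =>
      if c ((prefPerm w j)⁻¹ (lo i)) = c ((prefPerm w j)⁻¹ (hi i)) then 0 else 1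
  | _ => 0

/-- The defining relations of `F_n` and `FB_n` which do not involve
`ζ_i² = 1` or the classical third Reidemeister move ("strong" moves). -/
inductive RelStrong (n : ℕ) : List (Letter n) → List (Letter n) → Prop
  | tt (i : Fin (n-1)) : RelStrong n [.tau i, .tau i] []
  | virt (i : Fin (n-1)) : RelStrong n [.zeta i, .tau i] [.tau i, .zeta i]
  | far_zz (i j : Fin (n-1)) (h : 2 ≤ Nat.dist i j) :
      RelStrong n [.zeta i, .zeta j] [.zeta j, .zeta i]
  | far_zt (i j : Fin (n-1)) (h : 2 ≤ Nat.dist i j) :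
      RelStrong n [.zeta i, .tau j] [.tau j, .zeta i]
  | far_tt (i j : Fin (n-1)) (h : 2 ≤ Nat.dist i j) :
      RelStrong n [.tau i, .tau j] [.tau j, .tau i]
  | r3v (i j : Fin (n-1)) (h : (j:ℕ) = (i:ℕ) + 1) :
      RelStrong n [.tau i, .tau j, .tau i] [.tau j, .tau i, .tau j]
  | semi (i j : Fin (n-1)) (h : (j:ℕ) = (i:ℕ) + 1) :
      RelStrong n [.tau i, .tau j, .zeta i] [.zeta j, .tau i, .tau j]

/-- The defining relations of `F_n`. -/
inductive RelF (n : ℕ) : List (Letter n) → List (Letter n) → Prop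
  | strong {r1 r2} : RelStrong n r1 r2 → RelF n r1 r2
  | zz (i : Fin (n-1)) : RelF n [.zeta i, .zeta i] []

/-- The defining relations of the free braid group `FB_n`. -/
inductive RelFB (n : ℕ) : List (Letter n) → List (Letter n) → Prop
  | ofF {r1 r2} : RelF n r1 r2 → RelFB n r1 r2
  | r3c (i j : Fin (n-1)) (h : (j:ℕ) = (i:ℕ) + 1) :
      RelFB n [.zeta i, .zeta j, .zeta i] [.zeta j, .zeta i, .zeta j]

/-- One application of a relation from `R` inside a word. -/
def StepOf {n : ℕ} (R : List (Letter n) → List (Letter n) → Prop)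
    (w1 w2 : List (Letter n)) : Prop :=
  ∃ A B r1 r2, R r1 r2 ∧ w1 = A ++ r1 ++ B ∧ w2 = A ++ r2 ++ B

/-- Strong equivalence: all moves of `F_n` except `ζ_i² = 1`. -/
def StrongEq {n : ℕ} (w1 w2 : List (Letter n)) : Prop :=
  Relation.EqvGen (StepOf (RelStrong n)) w1 w2

/-- Equivalence of braid words as elements of `F_n`. -/
def EqF {n : ℕ} (w1 w2 : List (Letter n)) : Prop :=
  Relation.EqvGen (StepOf (RelF n)) w1 w2

/-- Equivalence of braid words as elements of the free braid group `FB_n`. -/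
def EqFB {n : ℕ} (w1 w2 : List (Letter n)) : Prop :=
  Relation.EqvGen (StepOf (RelFB n)) w1 w2

/-- The parity axioms, for a parity `P` defined on the class `C` of braid words.
`P w j` is the parity of the crossing at position `j` of `w` (only classical
positions matter). -/
structure IsParity {n : ℕ} (C : List (Letter n) → Prop)
    (P : List (Letter n) → ℕ → ZMod 2) : Prop where
  /-- Crossings not taking part in a relation keep their parity (part before). -/
  untouched_left : ∀ A B r1 r2, RelFB n r1 r2 →
    C (A ++ r1 ++ B) → C (A ++ r2 ++ B) → ∀ j < A.length,
    P (A ++ r1 ++ B) j = P (A ++ r2 ++ B) j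
  /-- Crossings not taking part in a relation keep their parity (part after). -/
  untouched_right : ∀ A B r1 r2, RelFB n r1 r2 →
    C (A ++ r1 ++ B) → C (A ++ r2 ++ B) → ∀ j < B.length,
    P (A ++ r1 ++ B) (A.length + r1.length + j) = P (A ++ r2 ++ B) (A.length + r2.length + j)
  /-- In commutation-type relations (far commutativity, virtualization), the two
  letters keep their parities. -/
  comm : ∀ A B x y, RelFB n [x, y] [y, x] →
    C (A ++ [x, y] ++ B) → C (A ++ [y, x] ++ B) →
    P (A ++ [x, y] ++ B) A.length = P (A ++ [y, x] ++ B) (A.length + 1) ∧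
    P (A ++ [x, y] ++ B) (A.length + 1) = P (A ++ [y, x] ++ B) A.length
  /-- In a classical second Reidemeister move both crossings have the same parity. -/
  r2c : ∀ A B (i : Fin (n-1)),
    C (A ++ [.zeta i, .zeta i] ++ B) → C (A ++ B) →
    P (A ++ [.zeta i, .zeta i] ++ B) A.length
      = P (A ++ [.zeta i, .zeta i] ++ B) (A.length + 1)
  /-- In a semivirtual move, the classical crossing keeps its parity. -/
  semiv : ∀ A B (i j : Fin (n-1)), (j:ℕ) = (i:ℕ) + 1 →
    C (A ++ [.tau i, .tau j, .zeta i] ++ B) →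
    C (A ++ [.zeta j, .tau i, .tau j] ++ B) →
    P (A ++ [.tau i, .tau j, .zeta i] ++ B) (A.length + 2)
      = P (A ++ [.zeta j, .tau i, .tau j] ++ B) A.length
  /-- In a classical third Reidemeister move the number of odd crossings is even. -/
  r3_even : ∀ A B (i j : Fin (n-1)), (j:ℕ) = (i:ℕ) + 1 →
    C (A ++ [.zeta i, .zeta j, .zeta i] ++ B) →
    C (A ++ [.zeta j, .zeta i, .zeta j] ++ B) →
    P (A ++ [.zeta i, .zeta j, .zeta i] ++ B) A.length
      + P (A ++ [.zeta i, .zeta j, .zeta i] ++ B) (A.length + 1)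
      + P (A ++ [.zeta i, .zeta j, .zeta i] ++ B) (A.length + 2) = 0
  /-- In a classical third Reidemeister move, upper/middle/lower crossings on the
  left correspond to lower/middle/upper crossings on the right with equal parities. -/
  r3_corr : ∀ A B (i j : Fin (n-1)), (j:ℕ) = (i:ℕ) + 1 →
    C (A ++ [.zeta i, .zeta j, .zeta i] ++ B) →
    C (A ++ [.zeta j, .zeta i, .zeta j] ++ B) →
    P (A ++ [.zeta i, .zeta j, .zeta i] ++ B) A.length
      = P (A ++ [.zeta j, .zeta i, .zeta j] ++ B) (A.length + 2) ∧
    P (A ++ [.zeta i, .zeta j, .zeta i] ++ B) (A.length + 1)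
      = P (A ++ [.zeta j, .zeta i, .zeta j] ++ B) (A.length + 1) ∧
    P (A ++ [.zeta i, .zeta j, .zeta i] ++ B) (A.length + 2)
      = P (A ++ [.zeta j, .zeta i, .zeta j] ++ B) A.length

/-- Delete from `w` all classical letters whose parity (given by `par`) is even. -/
def deleteEven {n : ℕ} (w : List (Letter n)) (par : ℕ → ZMod 2) : List (Letter n) :=
  (List.range w.length).filterMap fun j =>
    (w[j]?).bind fun g =>
      match g with
      | .zeta i => if par j = 0 then none else some (.zeta i)
      | .tau i => some (.tau i)

/-- The one-term parity bracket: delete all even classical crossings. -/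
def bracket {n : ℕ} (P : List (Letter n) → ℕ → ZMod 2) (w : List (Letter n)) :
    List (Letter n) :=
  deleteEven w (P w)

/-- Positions of classical crossings of a word. -/
def ZetaPos {n : ℕ} (w : List (Letter n)) : Set ℕ :=
  {j | ∃ i, w[j]? = some (Letter.zeta i)}

/-- The classical crossings at positions `j1 < j2` form a bigon: they lie on the same
pair of strands, and no classical crossing between them lies on either of those strands. -/
def IsBigon {n : ℕ} (w : List (Letter n)) (j1 j2 : ℕ) : Prop :=
  j1 < j2 ∧ j1 ∈ ZetaPos w ∧ j2 ∈ ZetaPos w ∧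
  strandsAt w j1 = strandsAt w j2 ∧
  ∀ k, j1 < k → k < j2 → k ∈ ZetaPos w →
    ∀ e e', strandsAt w j1 = some e → strandsAt w k = some e' → ∀ a ∈ e, a ∉ e'

/-- Delete the letters at two given positions. -/
def delete2 {n : ℕ} (w : List (Letter n)) (j1 j2 : ℕ) : List (Letter n) :=
  (w.eraseIdx (max j1 j2)).eraseIdx (min j1 j2)

/-- One bigon reduction. -/
def BigonStep {n : ℕ} (w w' : List (Letter n)) : Prop :=
  ∃ j1 j2, IsBigon w j1 j2 ∧ w' = delete2 w j1 j2

/-- A word is irreducible if it admits no bigon reduction. -/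
def Irreducible {n : ℕ} (w : List (Letter n)) : Prop := ¬ ∃ j1 j2, IsBigon w j1 j2

/-- Number of classical letters of a word. -/
def countZeta {n : ℕ} (w : List (Letter n)) : ℕ := (w.filter Letter.isZeta).length

/-- `φ` is an isomorphism of the decorated graphs `Γ(w1) ≅ Γ(w2)`, encoded
combinatorially: a bijection of classical crossings preserving the pair of strands
through each crossing, the order of crossings along each strand, and the endpoint
structure (the permutation). -/
structure IsGammaIso {n : ℕ} (w1 w2 : List (Letter n)) (φ : ℕ → ℕ) : Prop where
  maps : ∀ j ∈ ZetaPos w1, φ j ∈ ZetaPos w2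
  inj : ∀ j ∈ ZetaPos w1, ∀ j' ∈ ZetaPos w1, φ j = φ j' → j = j'
  surj : ∀ k ∈ ZetaPos w2, ∃ j ∈ ZetaPos w1, φ j = k
  strands : ∀ j ∈ ZetaPos w1, strandsAt w2 (φ j) = strandsAt w1 j
  order : ∀ j ∈ ZetaPos w1, ∀ j' ∈ ZetaPos w1, j < j' →
    (∃ e e' a, strandsAt w1 j = some e ∧ strandsAt w1 j' = some e' ∧ a ∈ e ∧ a ∈ e') →
    φ j < φ j'
  perm : permOf w1 = permOf w2

/-! ### The groups `F_n` and `FB_n` as presented groups -/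

/-- Generators: `Sum.inl i` is the classical generator `ζ_i`,
`Sum.inr i` is the virtual generator `τ_i`. -/
abbrev GGen (n : ℕ) := Fin (n-1) ⊕ Fin (n-1)

def zg {n : ℕ} (i : Fin (n-1)) : FreeGroup (GGen n) := FreeGroup.of (Sum.inl i)
def tg {n : ℕ} (i : Fin (n-1)) : FreeGroup (GGen n) := FreeGroup.of (Sum.inr i)

/-- The relators of `F_n`. -/
def FRels (n : ℕ) : Set (FreeGroup (GGen n)) :=
  (⋃ i, {zg i * zg i}) ∪ (⋃ i, {tg i * tg i}) ∪
  (⋃ i, {zg i * tg i * (tg i * zg i)⁻¹}) ∪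
  (⋃ (i : Fin (n-1)) (j : Fin (n-1)) (_ : 2 ≤ Nat.dist i j),
    {zg i * zg j * (zg j * zg i)⁻¹, zg i * tg j * (tg j * zg i)⁻¹,
     tg i * tg j * (tg j * tg i)⁻¹}) ∪
  (⋃ (i : Fin (n-1)) (j : Fin (n-1)) (_ : (j:ℕ) = (i:ℕ) + 1),
    {tg i * tg j * tg i * (tg j * tg i * tg j)⁻¹,
     tg i * tg j * zg i * (zg j * tg i * tg j)⁻¹})

/-- The relators of `FB_n`: those of `F_n` together with the classical third
Reidemeister relation. -/
def FBRels (n : ℕ) : Set (FreeGroup (GGen n)) :=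
  FRels n ∪
  (⋃ (i : Fin (n-1)) (j : Fin (n-1)) (_ : (j:ℕ) = (i:ℕ) + 1),
    {zg i * zg j * zg i * (zg j * zg i * zg j)⁻¹})

/-- The group `F_n`. -/
abbrev FGrp (n : ℕ) := PresentedGroup (FRels n)

/-- The free braid group `FB_n`. -/
abbrev FBGrp (n : ℕ) := PresentedGroup (FBRels n)

def zF {n : ℕ} (i : Fin (n-1)) : FGrp n := PresentedGroup.of (Sum.inl i)
def tF {n : ℕ} (i : Fin (n-1)) : FGrp n := PresentedGroup.of (Sum.inr i)

/-- Evaluation of a braid word in `F_n`. -/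
def evalF {n : ℕ} (w : List (Letter n)) : FGrp n :=
  (w.map fun g => match g with
    | Letter.zeta i => zF i
    | Letter.tau i => tF i).prod

/-- For each unordered pair of strands, the mod-2 number of classical letters of `w`
at which these two strands cross (strand labels traced from the top). -/
def crossPar {n : ℕ} : List (Letter n) → Sym2 (Fin n) → ZMod 2
  | [], _ => 0
  | g :: rest, e =>
    (match g with
     | Letter.zeta i => if e = s(lo i, hi i) then (1 : ZMod 2) else 0
     | Letter.tau _ => 0) + crossPar rest (e.map (transOf g))

/-! ### Chord diagrams and the Gaussian parity -/

/-- The setoid on strands given by `SameCycle`; its classes are the orbits of `σ`,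
i.e. the components of the closure. -/
def sameCycleSetoid {n : ℕ} (σ : Equiv.Perm (Fin n)) : Setoid (Fin n) :=
  ⟨σ.SameCycle, ⟨Equiv.Perm.SameCycle.refl σ, Equiv.Perm.SameCycle.symm,
    Equiv.Perm.SameCycle.trans⟩⟩

/-- The rank of a strand in the single cycle of `σ` starting from strand `0`. -/
noncomputable def rankIn {n : ℕ} [NeZero n] (σ : Equiv.Perm (Fin n)) (a : Fin n) : ℕ :=
  ((Function.invFun (fun k : Fin n => (σ ^ (k : ℕ)) 0) a : Fin n) : ℕ)

/-- Coordinates on the core circle of the two endpoints of the chord of the classical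
crossing at position `j` (the circle traverses the strands in the cyclic order of `σ`). -/
noncomputable def chordEnds {n : ℕ} [NeZero n] (w : List (Letter n))
    (σ : Equiv.Perm (Fin n)) (j : ℕ) : ℕ × ℕ :=
  match w[j]? with
  | some (Letter.zeta i) =>
      (rankIn σ ((prefPerm w j)⁻¹ (lo i)) * w.length + j,
       rankIn σ ((prefPerm w j)⁻¹ (hi i)) * w.length + j)
  | _ => (0, 0)

/-- Two chords are linked iff the endpoints of one separate the endpoints of the
other on the core circle. -/
def LinkedChords {n : ℕ} [NeZero n] (w : List (Letter n)) (σ : Equiv.Perm (Fin n))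
    (j k : ℕ) : Prop :=
  Xor' (min (chordEnds w σ j).1 (chordEnds w σ j).2 < (chordEnds w σ k).1 ∧
        (chordEnds w σ k).1 < max (chordEnds w σ j).1 (chordEnds w σ j).2)
       (min (chordEnds w σ j).1 (chordEnds w σ j).2 < (chordEnds w σ k).2 ∧
        (chordEnds w σ k).2 < max (chordEnds w σ j).1 (chordEnds w σ j).2)

/-- The Gaussian parity of the classical crossing at position `j`: the mod-2 number
of chords linked with its chord. Even (`0`) iff linked with evenly many chords. -/
noncomputable def gaussParity {n : ℕ} [NeZero n] (w : List (Letter n))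
    (σ : Equiv.Perm (Fin n)) (j : ℕ) : ZMod 2 :=
  (Nat.card {k : ℕ // k < w.length ∧ k ∈ ZetaPos w ∧ k ≠ j ∧ LinkedChords w σ j k} : ZMod 2)


variable {n : ℕ}

lemma prefPerm_take (w : List (Letter n)) (j : ℕ) :
    prefPerm w j = permOf (w.take j) := by
  simp [prefPerm, permOf]

lemma permOf_append (X Y : List (Letter n)) :
    permOf (X ++ Y) = permOf Y * permOf X := by
  simp [permOf]

lemma prefPerm_append (X Y : List (Letter n)) (k : ℕ) :
    prefPerm (X ++ Y) (X.length + k) = prefPerm Y k * permOf X := by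
  rw [prefPerm_take, List.take_length_add_append, permOf_append, prefPerm_take]

lemma cwParity_congr_take (c : Fin n → Bool) (w1 w2 : List (Letter n)) (j : ℕ)
    (h : w1.take (j+1) = w2.take (j+1)) : cwParity c w1 j = cwParity c w2 j := by
  have h1 : w1[j]? = w2[j]? := by
    have e1 : w1[j]? = (w1.take (j+1))[j]? := by
      rw [List.getElem?_take]; simp
    have e2 : w2[j]? = (w2.take (j+1))[j]? := by
      rw [List.getElem?_take]; simp
    rw [e1, e2, h]
  have h2 : prefPerm w1 j = prefPerm w2 j := by
    have e : w1.take j = w2.take j := by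
      have := congrArg (List.take j) h
      simpa [List.take_take, Nat.min_def] using this
    rw [prefPerm_take, prefPerm_take, e]
  rw [cwParity, cwParity, h1, h2]

lemma cwParity_mid (c : Fin n → Bool) (A r B : List (Letter n)) (k : ℕ) (hk : k < r.length) :
    cwParity c (A ++ r ++ B) (A.length + k)
      = cwParity (fun x => c ((permOf A)⁻¹ x)) r k := by
  have h1 : (A ++ r ++ B)[A.length + k]? = r[k]? := by
    rw [List.append_assoc, List.getElem?_append_right (by omega), Nat.add_sub_cancel_left,
      List.getElem?_append_left hk]
  have h2 : prefPerm (A ++ r ++ B) (A.length + k) = prefPerm r k * permOf A := by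
    rw [List.append_assoc, prefPerm_append, prefPerm_take, prefPerm_take,
      List.take_append_of_le_length (by omega)]
  rw [cwParity, cwParity, h1, h2]
  rcases hg : r[k]? with _ | g
  · rfl
  · cases g <;> simp [mul_inv_rev, Equiv.Perm.mul_apply]

lemma cwParity_right (c : Fin n → Bool) (A r B : List (Letter n)) (j : ℕ) :
    cwParity c (A ++ r ++ B) (A.length + r.length + j)
      = cwParity (fun x => c ((permOf (A ++ r))⁻¹ x)) B j := by
  have hl : (A ++ r).length = A.length + r.length := by simp
  have h1 : (A ++ r ++ B)[A.length + r.length + j]? = B[j]? := by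
    rw [List.getElem?_append_right (by omega)]
    congr 1; omega
  have h2 : prefPerm (A ++ r ++ B) (A.length + r.length + j)
      = prefPerm B j * permOf (A ++ r) := by
    have := prefPerm_append (A ++ r) B j
    rw [← this]; congr 1; omega
  rw [cwParity, cwParity, h1, h2]
  rcases hg : B[j]? with _ | g
  · rfl
  · cases g <;> simp [mul_inv_rev, Equiv.Perm.mul_apply]

lemma sPerm_fix (i : Fin (n-1)) (x : Fin n) (h1 : (x:ℕ) ≠ (i:ℕ)) (h2 : (x:ℕ) ≠ (i:ℕ)+1) :
    sPerm i x = x :=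
  Equiv.swap_apply_of_ne_of_ne (by simp [lo, Fin.ext_iff]; omega) (by simp [hi, Fin.ext_iff]; omega)

lemma swap_commute {α : Type*} [DecidableEq α] {a b c d : α}
    (hac : a ≠ c) (had : a ≠ d) (hbc : b ≠ c) (hbd : b ≠ d) :
    Equiv.swap a b * Equiv.swap c d = Equiv.swap c d * Equiv.swap a b := by
  ext x
  simp only [Equiv.Perm.mul_apply]
  rcases eq_or_ne x a with rfl | ha
  · rw [Equiv.swap_apply_of_ne_of_ne hac had, Equiv.swap_apply_left,
      Equiv.swap_apply_of_ne_of_ne hbc hbd]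
  rcases eq_or_ne x b with rfl | hb
  · rw [Equiv.swap_apply_of_ne_of_ne hbc hbd, Equiv.swap_apply_right,
      Equiv.swap_apply_of_ne_of_ne hac had]
  rcases eq_or_ne x c with rfl | hc
  · rw [Equiv.swap_apply_of_ne_of_ne (Ne.symm hac) (Ne.symm hbc), Equiv.swap_apply_left,
      Equiv.swap_apply_of_ne_of_ne (Ne.symm had) (Ne.symm hbd)]
  rcases eq_or_ne x d with rfl | hd
  · rw [Equiv.swap_apply_of_ne_of_ne (Ne.symm had) (Ne.symm hbd), Equiv.swap_apply_right,
      Equiv.swap_apply_of_ne_of_ne (Ne.symm hac) (Ne.symm hbc)]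
  simp [Equiv.swap_apply_of_ne_of_ne, ha, hb, hc, hd]

lemma swap_braid {α : Type*} [DecidableEq α] {a b c : α}
    (hab : a ≠ b) (hac : a ≠ c) (hbc : b ≠ c) :
    Equiv.swap a b * Equiv.swap b c * Equiv.swap a b
      = Equiv.swap b c * Equiv.swap a b * Equiv.swap b c := by
  have h1 : Equiv.swap a b * Equiv.swap b c * (Equiv.swap a b)⁻¹
      = Equiv.swap (Equiv.swap a b b) (Equiv.swap a b c) := (Equiv.swap_apply_apply _ _ _).symm
  have h2 : Equiv.swap b c * Equiv.swap a b * (Equiv.swap b c)⁻¹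
      = Equiv.swap (Equiv.swap b c a) (Equiv.swap b c b) := (Equiv.swap_apply_apply _ _ _).symm
  rw [Equiv.swap_apply_right, Equiv.swap_apply_of_ne_of_ne (Ne.symm hac) (Ne.symm hbc)] at h1
  rw [Equiv.swap_apply_left, Equiv.swap_apply_of_ne_of_ne hab hac] at h2
  rw [Equiv.swap_inv] at h1 h2
  rw [h1, h2, Equiv.swap_comm]

lemma lo_ne_hi (i : Fin (n-1)) : lo (n:=n) i ≠ hi i := by simp [lo, hi, Fin.ext_iff]

lemma sPerm_comm (i j : Fin (n-1)) (h : 2 ≤ Nat.dist i j) :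
    sPerm i * sPerm j = sPerm (n:=n) j * sPerm i := by
  simp only [Nat.dist] at h
  exact swap_commute (by simp [lo, hi, Fin.ext_iff]; omega) (by simp [lo, hi, Fin.ext_iff]; omega)
    (by simp [lo, hi, Fin.ext_iff]; omega) (by simp [lo, hi, Fin.ext_iff]; omega)

lemma lo_succ (i j : Fin (n-1)) (h : (j:ℕ) = (i:ℕ)+1) : lo (n:=n) j = hi i := by
  simp [lo, hi, Fin.ext_iff, h]

lemma sPerm_braid (i j : Fin (n-1)) (h : (j:ℕ) = (i:ℕ)+1) :
    sPerm i * sPerm j * sPerm i = sPerm (n:=n) j * sPerm i * sPerm j := by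
  unfold sPerm
  rw [lo_succ i j h]
  exact swap_braid (lo_ne_hi i) (by simp [lo, hi, Fin.ext_iff, h]; omega)
    (by simp [lo, hi, Fin.ext_iff, h])

lemma permOf_relFB {r1 r2 : List (Letter n)} (h : RelFB n r1 r2) : permOf r1 = permOf r2 := by
  rcases h with ⟨h⟩ | ⟨i, j, hij⟩
  · rcases h with h | i
    · rcases h with i | i | ⟨i,j,hij⟩ | ⟨i,j,hij⟩ | ⟨i,j,hij⟩ | ⟨i,j,hij⟩ | ⟨i,j,hij⟩ <;>
        simp only [permOf, List.map_cons, List.map_nil, List.reverse_cons, List.reverse_nil,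
          List.nil_append, List.cons_append, List.prod_cons, List.prod_nil, mul_one,
          transOf, Letter.idx, ← mul_assoc]
      · exact Equiv.swap_mul_self _ _
      · exact sPerm_comm j i (by rwa [Nat.dist_comm])
      · exact sPerm_comm j i (by rwa [Nat.dist_comm])
      · exact sPerm_comm j i (by rwa [Nat.dist_comm])
      · exact sPerm_braid i j hij
      · exact sPerm_braid i j hij
    · simp [permOf, transOf, Letter.idx, sPerm, Equiv.swap_mul_self]
  · simp only [permOf, List.map_cons, List.map_nil, List.reverse_cons, List.reverse_nil,
      List.nil_append, List.cons_append, List.prod_cons, List.prod_nil, mul_one,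
      transOf, Letter.idx, ← mul_assoc]
    exact sPerm_braid i j hij

lemma sPerm_inv (i : Fin (n-1)) : (sPerm (n:=n) i)⁻¹ = sPerm i := Equiv.swap_inv _ _

lemma sPerm_lo (i : Fin (n-1)) : sPerm (n:=n) i (lo i) = hi i := Equiv.swap_apply_left _ _
lemma sPerm_hi (i : Fin (n-1)) : sPerm (n:=n) i (hi i) = lo i := Equiv.swap_apply_right _ _

section adj
variable {i j : Fin (n-1)} (hj : (j:ℕ) = (i:ℕ)+1)
include hj

lemma adj1 : sPerm (n:=n) j (lo i) = lo i := sPerm_fix j _ (by simp [lo]; omega) (by simp [lo]; omega)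
lemma adj2 : sPerm (n:=n) i (hi j) = hi j := sPerm_fix i _ (by simp [hi]; omega) (by simp [hi]; omega)
lemma adj3 : sPerm (n:=n) j (hi i) = hi j := by rw [← lo_succ i j hj]; exact sPerm_lo j
lemma adj4 : sPerm (n:=n) j (hi j) = hi i := by rw [← lo_succ i j hj]; exact sPerm_hi j
end adj

section far
variable {i j : Fin (n-1)} (hd : 2 ≤ Nat.dist i j)
include hd

lemma far1 : sPerm (n:=n) j (lo i) = lo i := by
  simp only [Nat.dist] at hd
  exact sPerm_fix j _ (by simp [lo]; omega) (by simp [lo]; omega)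
lemma far2 : sPerm (n:=n) j (hi i) = hi i := by
  simp only [Nat.dist] at hd
  exact sPerm_fix j _ (by simp [hi]; omega) (by simp [hi]; omega)
end far

lemma ite_dsymm (d : Fin n → Bool) (a b : Fin n) :
    (if d a = d b then (0:ZMod 2) else 1) = (if d b = d a then 0 else 1) := by
  simp [eq_comm]

theorem componentwise_is_parity' (n : ℕ) (c : Fin n → Bool) :
    IsParity (fun _ => True) (cwParity c) := by
  constructor
  · -- untouched_left
    intro A B r1 r2 _ _ _ j hj
    apply cwParity_congr_take
    rw [List.append_assoc, List.append_assoc, List.take_append_of_le_length (by omega),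
      List.take_append_of_le_length (by omega)]
  · -- untouched_right
    intro A B r1 r2 hrel _ _ j hj
    rw [cwParity_right, cwParity_right]
    have : permOf (A ++ r1) = permOf (A ++ r2) := by
      rw [permOf_append, permOf_append, permOf_relFB hrel]
    rw [this]
  · -- comm
    intro A B x y hrel _ _
    have m0 : ∀ (r : List (Letter n)), r.length = 2 → cwParity c (A ++ r ++ B) A.length
        = cwParity (fun t => c ((permOf A)⁻¹ t)) r 0 := fun r hr => by
      simpa using cwParity_mid c A r B 0 (by omega)
    have m1 : ∀ (r : List (Letter n)), r.length = 2 → cwParity c (A ++ r ++ B) (A.length + 1)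
        = cwParity (fun t => c ((permOf A)⁻¹ t)) r 1 := fun r hr =>
      cwParity_mid c A r B 1 (by omega)
    set d : Fin n → Bool := fun t => c ((permOf A)⁻¹ t) with hd
    rcases hrel with ⟨hrel⟩ | _
    rcases hrel with hrel | _
    rcases hrel with _ | i | ⟨i,j,hij⟩ | ⟨i,j,hij⟩ | ⟨i,j,hij⟩ | _ | _
    · -- virt
      rw [m0 _ (by simp), m1 _ (by simp), m0 _ (by simp), m1 _ (by simp)]
      constructor
      · simp [cwParity, prefPerm, transOf, Letter.idx, sPerm_inv, sPerm_lo, sPerm_hi]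
        exact ite_dsymm d _ _
      · simp [cwParity, prefPerm]
    · -- far_zz
      rw [m0 _ (by simp), m1 _ (by simp), m0 _ (by simp), m1 _ (by simp)]
      constructor
      · simp [cwParity, prefPerm, transOf, Letter.idx, sPerm_inv, far1 hij, far2 hij]
      · simp [cwParity, prefPerm, transOf, Letter.idx, sPerm_inv,
          far1 (Nat.dist_comm (i:ℕ) j ▸ hij), far2 (Nat.dist_comm (i:ℕ) j ▸ hij)]
    · -- far_zt
      rw [m0 _ (by simp), m1 _ (by simp), m0 _ (by simp), m1 _ (by simp)]
      constructor
      · simp [cwParity, prefPerm, transOf, Letter.idx, sPerm_inv, far1 hij, far2 hij]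
      · simp [cwParity, prefPerm]
    · -- far_tt
      rw [m0 _ (by simp), m1 _ (by simp), m0 _ (by simp), m1 _ (by simp)]
      constructor <;> simp [cwParity, prefPerm]
  · -- r2c
    intro A B i _ _
    have m0 := cwParity_mid c A [Letter.zeta i, Letter.zeta i] B 0 (by simp)
    have m1 := cwParity_mid c A [Letter.zeta i, Letter.zeta i] B 1 (by simp)
    rw [show A.length + 0 = A.length by omega] at m0
    rw [m0, m1]
    simp [cwParity, prefPerm, transOf, Letter.idx, sPerm_inv, sPerm_lo, sPerm_hi]
    exact ite_dsymm _ _ _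
  · -- semiv
    intro A B i j hj _ _
    have m2 := cwParity_mid c A [Letter.tau i, Letter.tau j, Letter.zeta i] B 2 (by simp)
    have m0 := cwParity_mid c A [Letter.zeta j, Letter.tau i, Letter.tau j] B 0 (by simp)
    rw [show A.length + 0 = A.length by omega] at m0
    rw [m2, m0]
    simp [cwParity, prefPerm, transOf, Letter.idx, mul_inv_rev, sPerm_inv,
      Equiv.Perm.mul_apply, adj1 hj, adj2 hj, adj3 hj, adj4 hj, sPerm_lo, sPerm_hi,
      lo_succ i j hj]
  · -- r3_even
    intro A B i j hj _ _
    have m0 := cwParity_mid c A [Letter.zeta i, Letter.zeta j, Letter.zeta i] B 0 (by simp)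
    have m1 := cwParity_mid c A [Letter.zeta i, Letter.zeta j, Letter.zeta i] B 1 (by simp)
    have m2 := cwParity_mid c A [Letter.zeta i, Letter.zeta j, Letter.zeta i] B 2 (by simp)
    rw [show A.length + 0 = A.length by omega] at m0
    rw [m0, m1, m2]
    set d : Fin n → Bool := fun t => c ((permOf A)⁻¹ t) with hd
    have e0 : cwParity d [Letter.zeta i, Letter.zeta j, Letter.zeta i] 0
        = if d (lo i) = d (hi i) then 0 else 1 := by
      simp [cwParity, prefPerm]
    have e1 : cwParity d [Letter.zeta i, Letter.zeta j, Letter.zeta i] 1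
        = if d (lo i) = d (hi j) then 0 else 1 := by
      simp [cwParity, prefPerm, transOf, Letter.idx, sPerm_inv, lo_succ i j hj,
        sPerm_hi, adj2 hj]
    have e2 : cwParity d [Letter.zeta i, Letter.zeta j, Letter.zeta i] 2
        = if d (hi i) = d (hi j) then 0 else 1 := by
      simp [cwParity, prefPerm, transOf, Letter.idx, mul_inv_rev, sPerm_inv,
        Equiv.Perm.mul_apply, adj1 hj, adj2 hj, adj3 hj, sPerm_lo]
    rw [e0, e1, e2]
    have key : ∀ a b x : Bool, ((if a = b then (0:ZMod 2) else 1) + (if a = x then 0 else 1)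
        + (if b = x then 0 else 1)) = 0 := by decide
    exact key _ _ _
  · -- r3_corr
    intro A B i j hj _ _
    have mL0 := cwParity_mid c A [Letter.zeta i, Letter.zeta j, Letter.zeta i] B 0 (by simp)
    have mL1 := cwParity_mid c A [Letter.zeta i, Letter.zeta j, Letter.zeta i] B 1 (by simp)
    have mL2 := cwParity_mid c A [Letter.zeta i, Letter.zeta j, Letter.zeta i] B 2 (by simp)
    have mR0 := cwParity_mid c A [Letter.zeta j, Letter.zeta i, Letter.zeta j] B 0 (by simp)
    have mR1 := cwParity_mid c A [Letter.zeta j, Letter.zeta i, Letter.zeta j] B 1 (by simp)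
    have mR2 := cwParity_mid c A [Letter.zeta j, Letter.zeta i, Letter.zeta j] B 2 (by simp)
    rw [show A.length + 0 = A.length by omega] at mL0 mR0
    rw [mL0, mL1, mL2, mR0, mR1, mR2]
    set d : Fin n → Bool := fun t => c ((permOf A)⁻¹ t) with hd
    have eL0 : cwParity d [Letter.zeta i, Letter.zeta j, Letter.zeta i] 0
        = if d (lo i) = d (hi i) then 0 else 1 := by
      simp [cwParity, prefPerm]
    have eL1 : cwParity d [Letter.zeta i, Letter.zeta j, Letter.zeta i] 1
        = if d (lo i) = d (hi j) then 0 else 1 := by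
      simp [cwParity, prefPerm, transOf, Letter.idx, sPerm_inv, lo_succ i j hj,
        sPerm_hi, adj2 hj]
    have eL2 : cwParity d [Letter.zeta i, Letter.zeta j, Letter.zeta i] 2
        = if d (hi i) = d (hi j) then 0 else 1 := by
      simp [cwParity, prefPerm, transOf, Letter.idx, mul_inv_rev, sPerm_inv,
        Equiv.Perm.mul_apply, adj1 hj, adj2 hj, adj3 hj, sPerm_lo]
    have eR0 : cwParity d [Letter.zeta j, Letter.zeta i, Letter.zeta j] 0
        = if d (hi i) = d (hi j) then 0 else 1 := by
      simp [cwParity, prefPerm, lo_succ i j hj]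
    have eR1 : cwParity d [Letter.zeta j, Letter.zeta i, Letter.zeta j] 1
        = if d (lo i) = d (hi j) then 0 else 1 := by
      simp [cwParity, prefPerm, transOf, Letter.idx, sPerm_inv, adj1 hj, adj3 hj,
        lo_succ i j hj, adj4 hj]
    have eR2 : cwParity d [Letter.zeta j, Letter.zeta i, Letter.zeta j] 2
        = if d (lo i) = d (hi i) then 0 else 1 := by
      simp [cwParity, prefPerm, transOf, Letter.idx, mul_inv_rev, sPerm_inv,
        Equiv.Perm.mul_apply, lo_succ i j hj, sPerm_hi, adj1 hj, adj2 hj, adj4 hj]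
    rw [eL0, eL1, eL2, eR0, eR1, eR2]
    exact ⟨rfl, rfl, rfl⟩


/-- the component-wise parity determined by a partition
`{1,…,n} = N₁ ⊔ N₂` (encoded as `c : Fin n → Bool`) satisfies the parity axioms. -/
theorem componentwise_is_parity (n : ℕ) (c : Fin n → Bool) :
    IsParity (fun _ => True) (cwParity c) := by
  exact componentwise_is_parity' n c

end OneTermBracket
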